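/- G := Σ_{j ∈ ℤ/N} ρ_j^{⊗k} equals (N/(2N)^k) Σ_{x ∈ (ℤ/N)^k} Σ_{r ∈ ℤ/N} η_r^x |S_r^x,x⟩⟨S_r^x,x|; in particular G is diagonal in the basis {|S_r^x,x⟩} and rank G = |{(x,r) : η_r^x > 0}|. -/

import Mathlib

open Finset
open scoped ComplexOrder

noncomputable section

/-- The subset sum `b · x = ∑ j, b j * x j` over `ℤ/N`. -/
def dotP {N k : ℕ} (b : Fin k → Bool) (x : Fin k → ZMod N) : ZMod N :=
  ∑ j, if b j then x j else 0

/-- `η_r^x`: the number of bit strings `b ∈ {0,1}^k` with `b · x ≡ r (mod N)`. -/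
def etaN {N k : ℕ} (r : ZMod N) (x : Fin k → ZMod N) : ℕ :=
  (Finset.univ.filter fun b : Fin k → Bool => dotP b x = r).card

/-- `ω^a` where `ω = exp(2πi/N)` and `a ∈ ℤ/N`. -/
def wpow (N : ℕ) (a : ZMod N) : ℂ :=
  Complex.exp (2 * Real.pi * Complex.I * (a.val : ℂ) / N)

/-- The normalized subset-sum state `|S_r^x⟩ = η_r^{x,-1/2} ∑_{b·x = r} |b⟩` (the zero vector
when `η_r^x = 0`), as a vector in `ℂ^{2^k}`. -/
def Sstate {N k : ℕ} (r : ZMod N) (x : Fin k → ZMod N) : (Fin k → Bool) → ℂ :=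
  fun b => if dotP b x = r then ((Real.sqrt (etaN r x))⁻¹ : ℝ) else 0

/-- The vector `|S_r^x, x⟩` in `ℂ^{(2N)^k}`, with basis `|b, y⟩`. -/
def ketS {N k : ℕ} (r : ZMod N) (x : Fin k → ZMod N) :
    (Fin k → Bool) × (Fin k → ZMod N) → ℂ :=
  fun i => if i.2 = x then Sstate r x i.1 else 0

/-- The outer product `|u⟩⟨v|`. -/
def outerM {N k : ℕ} (u v : (Fin k → Bool) × (Fin k → ZMod N) → ℂ) :
    Matrix ((Fin k → Bool) × (Fin k → ZMod N)) ((Fin k → Bool) × (Fin k → ZMod N)) ℂ :=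
  Matrix.of fun i j => u i * star (v j)

/-- The pretty good measurement operators
`E_j = (1/N) ∑_x ∑_{p,q} ω^{j(p-q)} |S_p^x,x⟩⟨S_q^x,x|`. -/
def Emeas {k : ℕ} (N : ℕ) [NeZero N] (j : ZMod N) :
    Matrix ((Fin k → Bool) × (Fin k → ZMod N)) ((Fin k → Bool) × (Fin k → ZMod N)) ℂ :=
  (N : ℂ)⁻¹ • ∑ x : Fin k → ZMod N, ∑ p : ZMod N, ∑ q : ZMod N,
    wpow N (j * (p - q)) • outerM (ketS p x) (ketS q x)

/-- `k` copies of the dihedral hidden subgroup state for the subgroup `{e, r s^d}`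
(after the Fourier transform):
`ρ_d^{⊗k} = (2N)^{-k} ∑_x ∑_{p,q} ω^{d(p-q)} √(η_p^x η_q^x) |S_p^x,x⟩⟨S_q^x,x|`. -/
def rhod {k : ℕ} (N : ℕ) [NeZero N] (d : ZMod N) :
    Matrix ((Fin k → Bool) × (Fin k → ZMod N)) ((Fin k → Bool) × (Fin k → ZMod N)) ℂ :=
  ((2 * (N : ℂ)) ^ k)⁻¹ • ∑ x : Fin k → ZMod N, ∑ p : ZMod N, ∑ q : ZMod N,
    (wpow N (d * (p - q)) * (Real.sqrt ((etaN p x : ℝ) * (etaN q x : ℝ)) : ℝ)) •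
      outerM (ketS p x) (ketS q x)

/- ===== auxiliary lemmas ===== -/

lemma wpow_eq_pow {N : ℕ} [NeZero N] (a : ZMod N) :
    wpow N a = Complex.exp (2 * Real.pi * Complex.I / N) ^ a.val := by
  rw [wpow, ← Complex.exp_nat_mul]
  congr 1
  have hN : (N : ℂ) ≠ 0 := Nat.cast_ne_zero.mpr (NeZero.ne N)
  field_simp

lemma exp_pow_N {N : ℕ} [NeZero N] :
    Complex.exp (2 * Real.pi * Complex.I / N) ^ N = 1 := by
  have hN : (N : ℂ) ≠ 0 := Nat.cast_ne_zero.mpr (NeZero.ne N)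
  rw [← Complex.exp_nat_mul]
  rw [show (N : ℂ) * (2 * Real.pi * Complex.I / N) = 2 * Real.pi * Complex.I by field_simp]
  exact Complex.exp_two_pi_mul_I

lemma exp_pow_mod {N : ℕ} [NeZero N] (m : ℕ) :
    Complex.exp (2 * Real.pi * Complex.I / N) ^ m
      = Complex.exp (2 * Real.pi * Complex.I / N) ^ (m % N) := by
  conv_lhs => rw [← Nat.div_add_mod m N]
  rw [pow_add, pow_mul, exp_pow_N, one_pow, one_mul]

lemma sum_wpow {N : ℕ} [NeZero N] (a : ZMod N) :
    ∑ j : ZMod N, wpow N (j * a) = if a = 0 then (N : ℂ) else 0 := by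
  set ζ : ℂ := Complex.exp (2 * Real.pi * Complex.I / N) with hζdef
  have hζ : IsPrimitiveRoot ζ N := Complex.isPrimitiveRoot_exp N (NeZero.ne N)
  have key : ∀ j : ZMod N, wpow N (j * a) = (ζ ^ a.val) ^ j.val := by
    intro j
    rw [wpow_eq_pow, ← hζdef, ZMod.val_mul, ← exp_pow_mod, ← pow_mul, mul_comm j.val a.val]
  simp_rw [key]
  have hrange : ∑ j : ZMod N, (ζ ^ a.val) ^ j.val
      = ∑ i ∈ Finset.range N, (ζ ^ a.val) ^ i := by
    rw [← Fin.sum_univ_eq_sum_range]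
    exact Fintype.sum_bijective (fun j : ZMod N => (⟨j.val, ZMod.val_lt j⟩ : Fin N))
      ⟨fun x y h => ZMod.val_injective N (by simpa using congrArg Fin.val h),
        fun i => ⟨(i : Fin N).val, by ext; simp [ZMod.val_natCast_of_lt i.isLt]⟩⟩
      _ _ (fun j => rfl)
  rw [hrange]
  by_cases ha : a = 0
  · simp [ha]
  · rw [if_neg ha]
    have hne1 : ζ ^ a.val ≠ 1 :=
      hζ.pow_ne_one_of_pos_of_lt (ZMod.val_pos.mpr ha).ne' (ZMod.val_lt a)
    rw [geom_sum_eq hne1]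
    have : (ζ ^ a.val) ^ N = 1 := by
      rw [← pow_mul, mul_comm, pow_mul, hζ.pow_eq_one, one_pow]
    rw [this]
    simp

/-- the class of a basis index -/
def clsP {N k : ℕ} (i : (Fin k → Bool) × (Fin k → ZMod N)) : (Fin k → ZMod N) × ZMod N :=
  (i.2, dotP i.1 i.2)

/-- indicator matrix of classes -/
def Bmat (N k : ℕ) :
    Matrix ((Fin k → Bool) × (Fin k → ZMod N)) ((Fin k → ZMod N) × ZMod N) ℂ :=
  Matrix.of fun i s => if clsP i = s then 1 else 0

lemma etaN_pos_dotP {N k : ℕ} (b : Fin k → Bool) (y : Fin k → ZMod N) :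
    0 < etaN (dotP b y) y := by
  rw [etaN, Finset.card_pos]
  exact ⟨b, by simp⟩

lemma part1 {N k : ℕ} [NeZero N] :
    ∑ j : ZMod N, rhod (k := k) N j =
      ((N : ℂ) / (2 * (N : ℂ)) ^ k) • ∑ x : Fin k → ZMod N, ∑ r : ZMod N,
        (etaN r x : ℂ) • outerM (ketS r x) (ketS r x) := by
  have hx : ∀ x : Fin k → ZMod N,
      (∑ j : ZMod N, ∑ p : ZMod N, ∑ q : ZMod N,
        (wpow N (j * (p - q)) * (Real.sqrt ((etaN p x : ℝ) * (etaN q x : ℝ)) : ℝ)) •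
          outerM (ketS p x) (ketS q x))
      = ∑ r : ZMod N, ((N : ℂ) * (etaN r x : ℂ)) • outerM (ketS r x) (ketS r x) := by
    intro x
    rw [Finset.sum_comm]
    refine Finset.sum_congr rfl fun p _ => ?_
    rw [Finset.sum_comm]
    have step : ∀ q : ZMod N,
        (∑ j : ZMod N, (wpow N (j * (p - q)) *
            (Real.sqrt ((etaN p x : ℝ) * (etaN q x : ℝ)) : ℝ)) •
          outerM (ketS p x) (ketS q x))
        = ((if p - q = 0 then (N : ℂ) else 0) *
            (Real.sqrt ((etaN p x : ℝ) * (etaN q x : ℝ)) : ℝ)) •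
          outerM (ketS p x) (ketS q x) := by
      intro q
      rw [← Finset.sum_smul, ← Finset.sum_mul, sum_wpow]
    rw [Finset.sum_congr rfl fun q _ => step q]
    have hcond : ∀ q : ZMod N, (p - q = 0) = (p = q) := by
      intro q; simp [sub_eq_zero]
    simp_rw [hcond, ite_mul, zero_mul, ite_smul, zero_smul]
    rw [Finset.sum_ite_eq univ p (fun q =>
      ((N : ℂ) * (Real.sqrt ((etaN p x : ℝ) * (etaN q x : ℝ)) : ℝ)) •
        outerM (ketS p x) (ketS q x))]
    rw [if_pos (Finset.mem_univ p)]
    congr 2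
    rw [Real.sqrt_mul_self (Nat.cast_nonneg _)]
    push_cast
    ring
  calc ∑ j : ZMod N, rhod (k := k) N j
      = ((2 * (N : ℂ)) ^ k)⁻¹ • ∑ j : ZMod N, ∑ x : Fin k → ZMod N,
          ∑ p : ZMod N, ∑ q : ZMod N,
          (wpow N (j * (p - q)) * (Real.sqrt ((etaN p x : ℝ) * (etaN q x : ℝ)) : ℝ)) •
            outerM (ketS p x) (ketS q x) := by
        unfold rhod
        exact Finset.smul_sum.symm
    _ = ((2 * (N : ℂ)) ^ k)⁻¹ • ∑ x : Fin k → ZMod N, ∑ r : ZMod N,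
          ((N : ℂ) * (etaN r x : ℂ)) • outerM (ketS r x) (ketS r x) := by
        congr 1
        rw [Finset.sum_comm]
        exact Finset.sum_congr rfl fun x _ => hx x
    _ = ((N : ℂ) / (2 * (N : ℂ)) ^ k) • ∑ x : Fin k → ZMod N, ∑ r : ZMod N,
          (etaN r x : ℂ) • outerM (ketS r x) (ketS r x) := by
        simp only [Finset.smul_sum, smul_smul]
        refine Finset.sum_congr rfl fun x _ => Finset.sum_congr rfl fun r _ => ?_
        congr 1
        field_simp

lemma eta_sqrt_inv {N k : ℕ} {r : ZMod N} {x : Fin k → ZMod N} (h : etaN r x ≠ 0) :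
    (etaN r x : ℂ) * ((((Real.sqrt (etaN r x))⁻¹ : ℝ) : ℂ) *
      (((Real.sqrt (etaN r x))⁻¹ : ℝ) : ℂ)) = 1 := by
  have h0 : (0:ℝ) ≤ (etaN r x : ℝ) := Nat.cast_nonneg _
  have hs : ((Real.sqrt (etaN r x))⁻¹ : ℝ) * ((Real.sqrt (etaN r x))⁻¹ : ℝ)
      = ((etaN r x : ℝ))⁻¹ := by
    rw [← mul_inv, Real.mul_self_sqrt h0]
  rw [← Complex.ofReal_mul, hs, Complex.ofReal_inv]
  push_cast
  exact mul_inv_cancel₀ (Nat.cast_ne_zero.mpr h)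

open Matrix in
lemma eqBB {N k : ℕ} [NeZero N] :
    (∑ x : Fin k → ZMod N, ∑ r : ZMod N,
        (etaN r x : ℂ) • outerM (ketS r x) (ketS r x))
      = Bmat N k * (Bmat N k)ᴴ := by
  ext i j
  obtain ⟨b, y⟩ := i
  obtain ⟨b', y'⟩ := j
  have hR : (Bmat N k * (Bmat N k)ᴴ) (b, y) (b', y')
      = if clsP ((b, y) : (Fin k → Bool) × (Fin k → ZMod N)) = clsP (b', y') then 1 else 0 := by
    rw [Matrix.mul_apply]
    simp only [Bmat, Matrix.conjTranspose_apply, Matrix.of_apply, apply_ite (star : ℂ → ℂ),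
      star_one, star_zero, ite_mul, one_mul, zero_mul]
    rw [Finset.sum_ite_eq univ (clsP ((b, y) : (Fin k → Bool) × (Fin k → ZMod N)))
      (fun s => if clsP ((b', y') : (Fin k → Bool) × (Fin k → ZMod N)) = s then (1:ℂ) else 0)]
    simp [eq_comm]
  rw [hR]
  have hL : (∑ x : Fin k → ZMod N, ∑ r : ZMod N,
        (etaN r x : ℂ) • outerM (ketS r x) (ketS r x)) (b, y) (b', y')
      = ∑ x : Fin k → ZMod N, ∑ r : ZMod N,
        (etaN r x : ℂ) * (ketS r x (b, y) * star (ketS r x (b', y'))) := by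
    simp [Matrix.sum_apply, outerM]
  rw [hL]
  rw [Finset.sum_eq_single y]
  rotate_left
  · intro x _ hxy
    refine Finset.sum_eq_zero fun r _ => ?_
    simp [ketS, Ne.symm hxy]
  · intro h; exact absurd (Finset.mem_univ y) h
  rw [Finset.sum_eq_single (dotP b y)]
  rotate_left
  · intro r _ hr
    simp [ketS, Sstate, Ne.symm hr]
  · intro h; exact absurd (Finset.mem_univ (dotP b y)) h
  by_cases hy : y = y'
  · subst hy
    by_cases hd : dotP b' y = dotP b y
    · have hcond : clsP ((b, y) : (Fin k → Bool) × (Fin k → ZMod N)) = clsP (b', y) := by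
        simp [clsP, hd]
      rw [if_pos hcond]
      simp only [ketS, Sstate, if_pos rfl, if_pos (rfl : dotP b y = dotP b y), hd, if_true]
      rw [Complex.star_def, Complex.conj_ofReal]
      exact eta_sqrt_inv (Nat.pos_iff_ne_zero.mp (etaN_pos_dotP b y))
    · have hcond : clsP ((b, y) : (Fin k → Bool) × (Fin k → ZMod N)) ≠ clsP (b', y) :=
        fun h => hd (congrArg Prod.snd h).symm
      rw [if_neg hcond]
      simp [ketS, Sstate, hd]
  · have hcond : clsP ((b, y) : (Fin k → Bool) × (Fin k → ZMod N)) ≠ clsP (b', y') := by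
      simp [clsP]
      intro h'
      exact absurd h' hy
    rw [if_neg hcond]
    simp [ketS, Ne.symm hy]

lemma card_cls {N k : ℕ} [NeZero N] (s : (Fin k → ZMod N) × ZMod N) :
    (Finset.univ.filter fun i : (Fin k → Bool) × (Fin k → ZMod N) => clsP i = s).card
      = etaN s.2 s.1 := by
  rw [etaN]
  refine Finset.card_nbij' (fun i => i.1) (fun b => (b, s.1)) ?_ ?_ ?_ ?_
  · intro a ha
    simp only [Finset.mem_coe, Finset.mem_filter, Finset.mem_univ, true_and] at ha ⊢
    rw [← ha]
    simp [clsP]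
  · intro a ha
    simp only [Finset.mem_coe, Finset.mem_filter, Finset.mem_univ, true_and] at ha ⊢
    simp [clsP, Prod.ext_iff, ha]
  · intro a ha
    simp only [Finset.mem_coe, Finset.mem_filter, Finset.mem_univ, true_and] at ha
    have : a.2 = s.1 := congrArg Prod.fst ha.symm ▸ rfl
    · exact Prod.ext rfl (by rw [← ha]; rfl)
  · intro a _
    rfl

open Matrix in
lemma BtB {N k : ℕ} [NeZero N] :
    (Bmat N k)ᴴ * Bmat N k
      = Matrix.diagonal (fun s : (Fin k → ZMod N) × ZMod N => (etaN s.2 s.1 : ℂ)) := by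
  ext s t
  rw [Matrix.mul_apply]
  simp only [Bmat, Matrix.conjTranspose_apply, Matrix.of_apply, apply_ite (star : ℂ → ℂ),
    star_one, star_zero, ite_mul, one_mul, zero_mul]
  by_cases hst : s = t
  · subst hst
    rw [Matrix.diagonal_apply_eq]
    have : ∀ i : (Fin k → Bool) × (Fin k → ZMod N),
        (if clsP i = s then (if clsP i = s then (1:ℂ) else 0) else 0)
          = if clsP i = s then (1:ℂ) else 0 := by
      intro i; by_cases h : clsP i = s <;> simp [h]
    simp_rw [this]
    rw [Finset.sum_boole, card_cls]
  · rw [Matrix.diagonal_apply_ne _ hst]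
    refine Finset.sum_eq_zero fun i _ => ?_
    by_cases h1 : clsP i = s
    · rw [if_pos h1, if_neg (by rw [h1]; exact hst)]
    · rw [if_neg h1]

lemma rank_smul_ne_zero {n : Type*} [Fintype n] [DecidableEq n] {c : ℂ} (hc : c ≠ 0)
    (A : Matrix n n ℂ) : (c • A).rank = A.rank := by
  have h : c • A = (c • (1 : Matrix n n ℂ)) * A := by rw [Matrix.smul_mul, Matrix.one_mul]
  have hu : IsUnit (c • (1 : Matrix n n ℂ)).det := by
    simp [Matrix.det_smul, isUnit_iff_ne_zero, hc]
  rw [h, Matrix.rank_mul_eq_right_of_isUnit_det _ _ hu]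

/-- `G = ∑_j ρ_j^{⊗k} = (N/(2N)^k) ∑_x ∑_r η_r^x |S_r^x,x⟩⟨S_r^x,x|`; it is diagonal in the
subset-sum basis and `rank G = |{(x,r) : η_r^x > 0}|`. -/
theorem G_diagonal_and_rank {N k : ℕ} [NeZero N] (hk : 1 ≤ k) :
    (∑ j : ZMod N, rhod (k := k) N j =
        ((N : ℂ) / (2 * (N : ℂ)) ^ k) • ∑ x : Fin k → ZMod N, ∑ r : ZMod N,
          (etaN r x : ℂ) • outerM (ketS r x) (ketS r x)) ∧
      (∑ j : ZMod N, rhod (k := k) N j).rank =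
        (Finset.univ.filter fun xr : (Fin k → ZMod N) × ZMod N => 0 < etaN xr.2 xr.1).card := by
  have h1 := part1 (N := N) (k := k)
  refine ⟨h1, ?_⟩
  have hN : (N : ℂ) ≠ 0 := Nat.cast_ne_zero.mpr (NeZero.ne N)
  have hc : ((N : ℂ) / (2 * (N : ℂ)) ^ k) ≠ 0 :=
    div_ne_zero hN (pow_ne_zero _ (mul_ne_zero two_ne_zero hN))
  rw [h1, eqBB, rank_smul_ne_zero hc, Matrix.rank_self_mul_conjTranspose,
    ← Matrix.rank_conjTranspose_mul_self, BtB, Matrix.rank_diagonal,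
    Fintype.card_subtype]
  apply Finset.card_nbij' id id <;> intro a <;>
    simp [Nat.cast_ne_zero, Nat.pos_iff_ne_zero]
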